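/- Let D be a pretriangulated category with a fixed t-structure t, with aisles D^{≤n} (so D^{≤n} = D^{≤0}[-n]) and coaisles D^{≥n}. Let (U, V) be another t-structure on D which is intermediate with respect to t, i.e. D^{≤n} ⊆ U ⊆ D^{≤m} for some integers n ≤ m. Let D^b denote the full subcategory of t-bounded objects, i.e. those X lying in D^{≤a} ∩ D^{≥-a} for some integer a ≥ 0; D^b is a triangulated subcategory of D. Then the pair (U ∩ D^b, V ∩ D^b) is a t-structure on D^b. -/

import Mathlib

open CategoryTheory Limits Pretriangulated Triangulated

section Aux

variable {D : Type*} [Category D] [Preadditive D] [HasZeroObject D] [HasShift D ℤ]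
    [∀ n : ℤ, (shiftFunctor D n).Additive] [Pretriangulated D] (t : TStructure D)

/-- Orthogonality: a map from an object `≤ a` to an object `≥ b` with `a < b` is zero. -/
lemma aux_tzero {X Y : D} (f : X ⟶ Y) (a b : ℤ) (hab : a < b)
    (hX : t.le a X) (hY : t.ge b Y) : f = 0 := by
  have hX' : t.le 0 (X⟦a⟧) := t.le_shift a a 0 (by omega) X hX
  have hY' : t.ge (b - a) (Y⟦a⟧) := t.ge_shift b a (b - a) (by omega) Y hY
  have hY'' : t.ge 1 (Y⟦a⟧) := t.ge_antitone (by omega : (1 : ℤ) ≤ b - a) _ hY'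
  have h0 := t.zero' ((shiftFunctor D a).map f) hX' hY''
  apply (shiftFunctor D a).map_injective
  rw [h0, Functor.map_zero]

/-- Extension closure of the aisles `t.le a`. -/
lemma aux_le_ext (T : Triangle D) (hT : T ∈ distTriang D) (a : ℤ)
    (h₁ : t.le a T.obj₁) (h₃ : t.le a T.obj₃) : t.le a T.obj₂ := by
  obtain ⟨A, B, hA, hB, f, g, h, mem⟩ := t.exists_triangle T.obj₂ a (a + 1) rfl
  have hg : g = 0 := by
    obtain ⟨g', hg'⟩ := T.yoneda_exact₂ hT g
      (aux_tzero t _ a (a + 1) (by omega) h₁ hB)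
    rw [hg', aux_tzero t g' a (a + 1) (by omega) h₃ hB, comp_zero]
  have hBzero : IsZero B := by
    obtain ⟨v, hv⟩ := Triangle.yoneda_exact₂ _ (rot_of_distTriang _ mem) (𝟙 B)
      (by change g ≫ 𝟙 B = 0; rw [hg, zero_comp])
    rw [IsZero.iff_id_eq_zero, hv,
      aux_tzero t v (a - 1) (a + 1) (by omega)
        (t.le_shift a 1 (a - 1) (by omega) A hA) hB, comp_zero]
    rfl
  have : IsIso f := (Triangle.isZero₃_iff_isIso₁ _ mem).1 hBzero
  exact (t.le a).prop_of_iso (asIso f) hA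

/-- Extension closure of the coaisles `t.ge b`. -/
lemma aux_ge_ext (T : Triangle D) (hT : T ∈ distTriang D) (b : ℤ)
    (h₁ : t.ge b T.obj₁) (h₃ : t.ge b T.obj₃) : t.ge b T.obj₂ := by
  obtain ⟨A, B, hA, hB, f, g, h, mem⟩ := t.exists_triangle T.obj₂ (b - 1) b (by omega)
  have hf : f = 0 := by
    obtain ⟨u, hu⟩ := T.coyoneda_exact₂ hT f
      (aux_tzero t _ (b - 1) b (by omega) hA h₃)
    rw [hu, aux_tzero t u (b - 1) b (by omega) hA h₁, zero_comp]
  have hAzero : IsZero A := by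
    obtain ⟨w, hw⟩ := Triangle.coyoneda_exact₂ _ (inv_rot_of_distTriang _ mem) (𝟙 A)
      (by change 𝟙 A ≫ f = 0; rw [hf, comp_zero])
    rw [IsZero.iff_id_eq_zero, hw,
      aux_tzero t w (b - 1) (b + 1) (by omega) hA
        (t.ge_shift b (-1) (b + 1) (by omega) B hB), zero_comp]
    rfl
  have : IsIso g := (Triangle.isZero₁_iff_isIso₂ _ mem).1 hAzero
  exact (t.ge b).prop_of_iso (asIso g).symm hB

end Aux

/-- The class of bounded objects with respect to a t-structure `t`: those `X` lying in
`D^{≤a} ∩ D^{≥-a}` for some integer `a ≥ 0`. -/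
def tBounded {D : Type*} [Category D] [Preadditive D] [HasZeroObject D] [HasShift D ℤ]
    [∀ n : ℤ, (shiftFunctor D n).Additive] [Pretriangulated D]
    (t : TStructure D) : Set D :=
  {X : D | ∃ a : ℤ, 0 ≤ a ∧ t.le a X ∧ t.ge (-a) X}

/-- Let `D` be a pretriangulated category with a fixed t-structure `t`, and
let `(U, V)` be another t-structure on `D` which is intermediate with respect to `t`, i.e.
`D^{≤n} ⊆ U ⊆ D^{≤m}` for some integers `n ≤ m`. Then `(U ∩ D^b, V ∩ D^b)` is a t-structure
on the subcategory `D^b` of `t`-bounded objects: the coaisle is the right Hom-orthogonal of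
the aisle inside `D^b`, the aisle is closed under suspension, and every object of `D^b`
admits an approximating distinguished triangle with outer terms in the two classes. -/
theorem stmt_4 {D : Type*} [Category D]
    [Preadditive D] [HasZeroObject D] [HasShift D ℤ]
    [∀ n : ℤ, (shiftFunctor D n).Additive] [Pretriangulated D]
    (t : TStructure D)
    -- the second t-structure `(U, V)`:
    (U V : Set D)
    (hUiso : ∀ (Z Z' : D), (Z ≅ Z') → Z ∈ U → Z' ∈ U)
    (hV : V = {X : D | ∀ A ∈ U, ∀ f : A ⟶ X, f = 0})
    (hU : ∀ X ∈ U, X⟦(1 : ℤ)⟧ ∈ U)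
    (htri : ∀ X : D, ∃ (A B : D) (f : A ⟶ X) (g : X ⟶ B) (h : B ⟶ A⟦(1 : ℤ)⟧),
      A ∈ U ∧ B ∈ V ∧ Triangle.mk f g h ∈ (distTriang D))
    -- `(U, V)` is intermediate with respect to `t`:
    (n m : ℤ) (hnm : n ≤ m)
    (h₁ : ∀ X : D, t.le n X → X ∈ U) (h₂ : ∀ X ∈ U, t.le m X) :
    (∀ X ∈ tBounded t, (X ∈ V ↔ ∀ A ∈ U ∩ tBounded t, ∀ f : A ⟶ X, f = 0)) ∧
    (∀ X ∈ U ∩ tBounded t, X⟦(1 : ℤ)⟧ ∈ U ∩ tBounded t) ∧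
    (∀ X ∈ tBounded t, ∃ (A B : D) (f : A ⟶ X) (g : X ⟶ B) (h : B ⟶ A⟦(1 : ℤ)⟧),
      A ∈ U ∩ tBounded t ∧ B ∈ V ∩ tBounded t ∧ Triangle.mk f g h ∈ (distTriang D)) := by
  -- Every object of `V` is `≥ n+1`.
  have hVge : ∀ X ∈ V, t.ge (n + 1) X := by
    intro X hXV
    obtain ⟨P, Q, hP, hQ, f, g, h, mem⟩ := t.exists_triangle X n (n + 1) rfl
    have hf : f = 0 := by
      rw [hV] at hXV
      exact hXV P (h₁ P hP) f
    have hPzero : IsZero P := by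
      obtain ⟨w, hw⟩ := Triangle.coyoneda_exact₂ _ (inv_rot_of_distTriang _ mem) (𝟙 P)
        (by change 𝟙 P ≫ f = 0; rw [hf, comp_zero])
      rw [IsZero.iff_id_eq_zero, hw,
        aux_tzero t w n (n + 2) (by omega) hP
          (t.ge_shift (n + 1) (-1) (n + 2) (by omega) Q hQ), zero_comp]
      rfl
    have : IsIso g := (Triangle.isZero₁_iff_isIso₂ _ mem).1 hPzero
    exact (t.ge (n + 1)).prop_of_iso (asIso g).symm hQ
  -- The key construction: truncation triangles for bounded objects stay bounded.
  have key : ∀ X ∈ tBounded t, ∃ (A B : D) (f : A ⟶ X) (g : X ⟶ B) (h : B ⟶ A⟦(1 : ℤ)⟧),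
      A ∈ U ∩ tBounded t ∧ B ∈ V ∩ tBounded t ∧ Triangle.mk f g h ∈ (distTriang D) := by
    intro X hX
    obtain ⟨a, ha0, hXle, hXge⟩ := hX
    obtain ⟨A, B, f, g, h, hAU, hBV, mem⟩ := htri X
    set b : ℤ := max a (max m (-(n + 1))) with hb
    have hab : a ≤ b := le_max_left _ _
    have hmb : m ≤ b := le_trans (le_max_left _ _) (le_max_right _ _)
    have hnb : -(n + 1) ≤ b := le_trans (le_max_right _ _) (le_max_right _ _)
    have hb0 : 0 ≤ b := le_trans ha0 hab
    have hAm : t.le m A := h₂ A hAU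
    have hBge : t.ge (n + 1) B := hVge B hBV
    -- `B` is bounded: use the rotated triangle `X → B → A⟦1⟧`.
    have hBle : t.le b B := by
      have := aux_le_ext t _ (rot_of_distTriang _ mem) b
        (t.le_monotone hab _ hXle)
        (t.le_monotone (show m - 1 ≤ b by omega) _
          (t.le_shift m 1 (m - 1) (by omega) A hAm))
      exact this
    have hBge' : t.ge (-b) B := t.ge_antitone (show -b ≤ n + 1 by omega) _ hBge
    -- `A` is bounded: use the inverse-rotated triangle `B⟦-1⟧ → A → X`.
    have hAge : t.ge (-b) A := by
      have := aux_ge_ext t _ (inv_rot_of_distTriang _ mem) (-b)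
        (t.ge_antitone (show -b ≤ n + 2 by omega) _
          (t.ge_shift (n + 1) (-1) (n + 2) (by omega) B hBge))
        (t.ge_antitone (show -b ≤ -a by omega) _ hXge)
      exact this
    exact ⟨A, B, f, g, h, ⟨hAU, b, hb0, t.le_monotone hmb _ hAm, hAge⟩,
      ⟨hBV, b, hb0, hBle, hBge'⟩, mem⟩
  refine ⟨?_, ?_, key⟩
  · -- the orthogonality characterization
    intro X hX
    constructor
    · intro hXV A hA f
      rw [hV] at hXV
      exact hXV A hA.1 f
    · intro hOrth
      rw [hV]
      intro A hAU f
      obtain ⟨a, ha0, hXle, hXge⟩ := hX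
      -- truncate `A` at `-a`:
      obtain ⟨P, B', hP, hB', ι, p, hcon, mem⟩ := t.exists_triangle A (-a - 1) (-a) (by omega)
      have hιf : ι ≫ f = 0 := aux_tzero t _ (-a - 1) (-a) (by omega) hP hXge
      obtain ⟨g, hg⟩ := Triangle.yoneda_exact₂ _ mem f hιf
      -- `B'` is bounded:
      have hB'b : B' ∈ tBounded t := by
        refine ⟨max a m, le_trans ha0 (le_max_left _ _), ?_, ?_⟩
        · exact aux_le_ext t _ (rot_of_distTriang _ mem) (max a m)
            (t.le_monotone (le_max_right a m) _ (h₂ A hAU))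
            (t.le_monotone (show -a - 1 - 1 ≤ max a m by
                have := le_max_left a m; omega) _
              (t.le_shift (-a - 1) 1 (-a - 1 - 1) (by omega) P hP))
        · exact t.ge_antitone (show -(max a m) ≤ -a by
            have := le_max_left a m; omega) _ hB'
      -- approximate `B'` by the `(U, V)` t-structure, with bounded pieces:
      obtain ⟨A₁, B₁, f₁, g₁, h₁', hA₁, hB₁, mem₁⟩ := key B' hB'b
      have hf₁g : f₁ ≫ g = 0 := hOrth A₁ hA₁ (f₁ ≫ g)
      obtain ⟨g₂, hg₂⟩ := Triangle.yoneda_exact₂ _ mem₁ g hf₁g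
      have hz : (p ≫ g₁ : A ⟶ B₁) = 0 := by
        rw [hV] at hB₁
        exact hB₁.1 A hAU (p ≫ g₁)
      rw [hg, hg₂]
      change p ≫ g₁ ≫ g₂ = 0
      exact (Category.assoc _ _ _).symm.trans
        ((congrArg (fun k => k ≫ (g₂ : B₁ ⟶ X)) hz).trans zero_comp)
  · -- closure under suspension
    rintro X ⟨hXU, a, ha0, hXle, hXge⟩
    refine ⟨hU X hXU, a + 1, by omega, ?_, ?_⟩
    · exact t.le_monotone (show a - 1 ≤ a + 1 by omega) _
        (t.le_shift a 1 (a - 1) (by omega) X hXle)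
    · have := t.ge_shift (-a) 1 (-(a + 1)) (by omega) X hXge
      exact this
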